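/- The single layer heat potential decays like a Gaussian at spatial infinity: there exist constants C > 0 and c₀ > 0 (one may take c₀ = 1/(8T)) such that |v[μ](t,x)| ≤ C·exp(−c₀·dist(x,K)²) for all t ∈ [0,T] and all x ∈ ℝⁿ with dist(x,K) ≥ 1. In particular v[μ](t,x) → 0 as ‖x‖ → ∞, uniformly in t ∈ [0,T]. -/

import Mathlib

open Real MeasureTheory

/-- The fundamental solution of the heat equation in `ℝⁿ`. -/
noncomputable def Sn (n : ℕ) (t : ℝ) (x : EuclideanSpace ℝ (Fin n)) : ℝ :=
  if 0 < t then (4 * Real.pi * t) ^ (-(n : ℝ) / 2) * Real.exp (-‖x‖ ^ 2 / (4 * t)) else 0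

lemma aux_pow_le_exp (x : ℝ) (hx : 0 ≤ x) (n : ℕ) : x ^ n / (n.factorial : ℝ) ≤ Real.exp x :=
  calc x ^ n / (n.factorial : ℝ) ≤ ∑ i ∈ Finset.range (n+1), x ^ i / (i.factorial : ℝ) :=
        Finset.single_le_sum (f := fun i => x ^ i / (i.factorial : ℝ))
          (fun i _ => by positivity) (Finset.self_mem_range_succ n)
    _ ≤ Real.exp x := Real.sum_le_exp_of_nonneg hx _

lemma Sn_nonneg (n : ℕ) (t : ℝ) (x : EuclideanSpace ℝ (Fin n)) : 0 ≤ Sn n t x := by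
  unfold Sn; split_ifs with h
  · have := Real.pi_pos; positivity
  · exact le_refl _

lemma Sn_le (n : ℕ) (T s d : ℝ) (hT : 0 < T) (hsT : s ≤ T) (hd : 1 ≤ d)
    (z : EuclideanSpace ℝ (Fin n)) (hz : d ≤ ‖z‖) :
    Sn n s z ≤ (4 * Real.pi) ^ (-(n : ℝ) / 2) * (n.factorial : ℝ) * 8 ^ n * T ^ ((n : ℝ) / 2)
      * Real.exp (-d ^ 2 / (8 * T)) := by
  have hpi := Real.pi_pos
  have hd0 : (0:ℝ) < d := lt_of_lt_of_le one_pos hd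
  have hd2 : (1:ℝ) ≤ d ^ 2 := by nlinarith
  unfold Sn; split_ifs with hs
  · have h8s : (0:ℝ) < 8 * s := by linarith
    have key1 : Real.exp (-‖z‖ ^ 2 / (4 * s)) ≤
        Real.exp (-(1 / (8 * s))) * Real.exp (-d ^ 2 / (8 * T)) := by
      rw [← Real.exp_add]
      apply Real.exp_le_exp.2
      have e1 : 1 / (8 * s) ≤ d ^ 2 / (8 * s) := by gcongr
      have e2 : d ^ 2 / (8 * T) ≤ d ^ 2 / (8 * s) := by
        apply div_le_div_of_nonneg_left (by positivity) h8s (by linarith)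
      have e3 : d ^ 2 / (8 * s) + d ^ 2 / (8 * s) = d ^ 2 / (4 * s) := by
        field_simp; ring
      have e4 : d ^ 2 / (4 * s) ≤ ‖z‖ ^ 2 / (4 * s) := by gcongr
      rw [neg_div, neg_div]
      linarith
    have key2 : Real.exp (-(1 / (8 * s))) ≤ (n.factorial : ℝ) * (8 * s) ^ n := by
      have h := aux_pow_le_exp (1 / (8 * s)) (by positivity) n
      have hxpos : (0:ℝ) < (1 / (8 * s)) ^ n / (n.factorial : ℝ) := by positivity
      rw [Real.exp_neg]
      calc (Real.exp (1 / (8 * s)))⁻¹ ≤ ((1 / (8 * s)) ^ n / (n.factorial : ℝ))⁻¹ :=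
            inv_anti₀ hxpos h
        _ = (n.factorial : ℝ) * (8 * s) ^ n := by rw [inv_div, one_div, inv_pow, div_inv_eq_mul]
    have hspow : s ^ (-(n : ℝ) / 2) * s ^ n = s ^ ((n : ℝ) / 2) := by
      rw [← Real.rpow_natCast s n, ← Real.rpow_add hs]
      congr 1; ring
    have hpow : (4 * Real.pi * s) ^ (-(n : ℝ) / 2) * ((n.factorial : ℝ) * (8 * s) ^ n)
        = (4 * Real.pi) ^ (-(n : ℝ) / 2) * (n.factorial : ℝ) * 8 ^ n * s ^ ((n : ℝ) / 2) := by
      rw [Real.mul_rpow (by positivity) hs.le, mul_pow, ← hspow]; ring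
    calc (4 * Real.pi * s) ^ (-(n : ℝ) / 2) * Real.exp (-‖z‖ ^ 2 / (4 * s))
        ≤ (4 * Real.pi * s) ^ (-(n : ℝ) / 2) *
            (((n.factorial : ℝ) * (8 * s) ^ n) * Real.exp (-d ^ 2 / (8 * T))) := by
          apply mul_le_mul_of_nonneg_left _ (by positivity)
          exact key1.trans (mul_le_mul_of_nonneg_right key2 (Real.exp_nonneg _))
      _ = (4 * Real.pi) ^ (-(n : ℝ) / 2) * (n.factorial : ℝ) * 8 ^ n * s ^ ((n : ℝ) / 2)
            * Real.exp (-d ^ 2 / (8 * T)) := by rw [← mul_assoc, hpow]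
      _ ≤ (4 * Real.pi) ^ (-(n : ℝ) / 2) * (n.factorial : ℝ) * 8 ^ n * T ^ ((n : ℝ) / 2)
            * Real.exp (-d ^ 2 / (8 * T)) := by
          have hsT' : s ^ ((n : ℝ) / 2) ≤ T ^ ((n : ℝ) / 2) :=
            Real.rpow_le_rpow hs.le hsT (by positivity)
          have h1 : (0:ℝ) ≤ (4 * Real.pi) ^ (-(n : ℝ) / 2) * (n.factorial : ℝ) * 8 ^ n := by
            positivity
          exact mul_le_mul_of_nonneg_right (mul_le_mul_of_nonneg_left hsT' h1) (Real.exp_nonneg _)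
  · have : (0:ℝ) ≤ (4 * Real.pi) ^ (-(n : ℝ) / 2) * (n.factorial : ℝ) * 8 ^ n
        * T ^ ((n : ℝ) / 2) * Real.exp (-d ^ 2 / (8 * T)) := by
      have := Real.pi_pos; positivity
    linarith

/-- The single layer heat potential `v[μ](t,x) = ∫₀ᵗ ∫ S_n(t−τ, x−y) μ(τ,y) dσ(y) dτ`. -/
noncomputable def singleLayer (n : ℕ) (σ : Measure (EuclideanSpace ℝ (Fin n)))
    (μ : ℝ → EuclideanSpace ℝ (Fin n) → ℝ) (t : ℝ) (x : EuclideanSpace ℝ (Fin n)) : ℝ :=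
  ∫ τ in Set.Ioc (0 : ℝ) t, ∫ y, Sn n (t - τ) (x - y) * μ τ y ∂σ

/-- The single layer heat potential decays like a Gaussian at spatial infinity: there are
constants `C > 0` and `c₀ > 0` such that `|v[μ](t,x)| ≤ C·exp(−c₀·dist(x,K)²)` whenever
`dist(x,K) ≥ 1`; in particular `v[μ](t,x) → 0` as `‖x‖ → ∞`, uniformly in `t ∈ [0,T]`. -/
theorem singleLayer_gaussian_decay (n : ℕ) (hn : 2 ≤ n) (T : ℝ) (hT : 0 < T)
    (σ : Measure (EuclideanSpace ℝ (Fin n))) [IsFiniteMeasure σ]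
    (K : Set (EuclideanSpace ℝ (Fin n))) (hK : IsCompact K)
    (hKsupp : K = {x | ∀ U : Set (EuclideanSpace ℝ (Fin n)), IsOpen U → x ∈ U → σ U ≠ 0})
    (μ : ℝ → EuclideanSpace ℝ (Fin n) → ℝ)
    (hμmeas : Measurable (Function.uncurry μ))
    (M : ℝ) (hμbd : ∀ t x, |μ t x| ≤ M) :
    (∃ C : ℝ, 0 < C ∧ ∃ c₀ : ℝ, 0 < c₀ ∧
      ∀ t ∈ Set.Icc (0 : ℝ) T, ∀ x : EuclideanSpace ℝ (Fin n),
        1 ≤ Metric.infDist x K →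
        |singleLayer n σ μ t x| ≤ C * Real.exp (-c₀ * Metric.infDist x K ^ 2)) ∧
    (∀ ε : ℝ, 0 < ε → ∃ R : ℝ, ∀ x : EuclideanSpace ℝ (Fin n), R ≤ ‖x‖ →
      ∀ t ∈ Set.Icc (0 : ℝ) T, |singleLayer n σ μ t x| ≤ ε) := by
  have hpi := Real.pi_pos
  have hM0 : (0:ℝ) ≤ M := (abs_nonneg _).trans (hμbd 0 0)
  set A : ℝ := (4 * Real.pi) ^ (-(n : ℝ) / 2) * (n.factorial : ℝ) * 8 ^ n * T ^ ((n : ℝ) / 2)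
    with hA_def
  have hA : 0 ≤ A := by positivity
  set su : ℝ := (σ Set.univ).toReal with hsu_def
  have hsu : 0 ≤ su := ENNReal.toReal_nonneg
  set C : ℝ := A * (M * su) * T + 1 with hC_def
  have hC : 0 < C := by positivity
  set c₀ : ℝ := 1 / (8 * T) with hc₀_def
  have hc₀ : 0 < c₀ := by positivity
  -- points outside K have null neighborhoods
  have hnotK : ∀ y, y ∉ K → ∃ U, IsOpen U ∧ y ∈ U ∧ σ U = 0 := by
    intro y hy
    have hy' : ¬ ∀ U : Set (EuclideanSpace ℝ (Fin n)), IsOpen U → y ∈ U → σ U ≠ 0 := by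
      rw [hKsupp] at hy; exact hy
    push_neg at hy'
    obtain ⟨U, hUo, hyU, hU0⟩ := hy'
    exact ⟨U, hUo, hyU, hU0⟩
  have hσK : σ Kᶜ = 0 := by
    apply measure_null_of_locally_null
    intro y hy
    obtain ⟨U, hUo, hyU, hU0⟩ := hnotK y hy
    exact ⟨U, nhdsWithin_le_nhds (hUo.mem_nhds hyU), hU0⟩
  have haeK : ∀ᵐ y ∂σ, y ∈ K := by
    rw [ae_iff]
    exact hσK
  -- the main bound
  have hbound : ∀ t ∈ Set.Icc (0:ℝ) T, ∀ x : EuclideanSpace ℝ (Fin n),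
      1 ≤ Metric.infDist x K →
      |singleLayer n σ μ t x| ≤ C * Real.exp (-c₀ * Metric.infDist x K ^ 2) := by
    intro t ht x hx
    set d := Metric.infDist x K with hd_def
    have hinner : ∀ τ ∈ Set.Ioc (0:ℝ) t, ‖∫ y, Sn n (t - τ) (x - y) * μ τ y ∂σ‖ ≤
        A * Real.exp (-d ^ 2 / (8 * T)) * M * su := by
      intro τ hτ
      have hb : ∀ᵐ y ∂σ, ‖Sn n (t - τ) (x - y) * μ τ y‖ ≤
          A * Real.exp (-d ^ 2 / (8 * T)) * M := by
        filter_upwards [haeK] with y hyK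
        have hdz : d ≤ ‖x - y‖ := by
          rw [← dist_eq_norm]; exact Metric.infDist_le_dist_of_mem hyK
        have hS := Sn_le n T (t - τ) d hT (by linarith [hτ.1, ht.2]) hx (x - y) hdz
        rw [norm_mul, Real.norm_eq_abs, Real.norm_eq_abs,
          abs_of_nonneg (Sn_nonneg n (t - τ) (x - y))]
        have hAe : (0:ℝ) ≤ A * Real.exp (-d ^ 2 / (8 * T)) := by positivity
        exact mul_le_mul hS (hμbd τ y) (abs_nonneg _) hAe
      exact norm_integral_le_of_norm_le_const hb
    have houter := norm_setIntegral_le_of_norm_le_const_ae' (μ := volume)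
      (s := Set.Ioc (0:ℝ) t) measure_Ioc_lt_top
      (Filter.Eventually.of_forall hinner)
    have hvol : volume.real (Set.Ioc (0:ℝ) t) = t := by
      rw [measureReal_def, Real.volume_Ioc, ENNReal.toReal_ofReal (by linarith [ht.1])]
      ring
    rw [hvol] at houter
    have hexp : Real.exp (-d ^ 2 / (8 * T)) = Real.exp (-c₀ * d ^ 2) := by
      congr 1; rw [hc₀_def]; ring
    have hCs : (0:ℝ) ≤ A * Real.exp (-d ^ 2 / (8 * T)) * M * su := by positivity
    have h1 : A * Real.exp (-d ^ 2 / (8 * T)) * M * su * t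
        ≤ C * Real.exp (-c₀ * d ^ 2) := by
      rw [← hexp, hC_def]
      have e1 : A * Real.exp (-d ^ 2 / (8 * T)) * M * su * t
          ≤ A * Real.exp (-d ^ 2 / (8 * T)) * M * su * T := by
        apply mul_le_mul_of_nonneg_left ht.2 hCs
      have e2 : A * Real.exp (-d ^ 2 / (8 * T)) * M * su * T
          ≤ (A * (M * su) * T + 1) * Real.exp (-d ^ 2 / (8 * T)) := by
        have : (0:ℝ) ≤ Real.exp (-d ^ 2 / (8 * T)) := Real.exp_nonneg _
        nlinarith
      linarith
    calc |singleLayer n σ μ t x| = ‖singleLayer n σ μ t x‖ := (Real.norm_eq_abs _).symm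
      _ ≤ A * Real.exp (-d ^ 2 / (8 * T)) * M * su * t := houter
      _ ≤ C * Real.exp (-c₀ * d ^ 2) := h1
  refine ⟨⟨C, hC, c₀, hc₀, hbound⟩, ?_⟩
  intro ε hε
  rcases Set.eq_empty_or_nonempty K with hKe | hne
  · -- σ = 0
    have hσ0 : σ = 0 := by
      rw [← Measure.measure_univ_eq_zero]
      apply measure_null_of_locally_null
      intro y _
      obtain ⟨U, hUo, hyU, hU0⟩ := hnotK y (by rw [hKe]; exact Set.notMem_empty y)
      exact ⟨U, nhdsWithin_le_nhds (hUo.mem_nhds hyU), hU0⟩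
    refine ⟨0, fun x _ t _ => ?_⟩
    have : singleLayer n σ μ t x = 0 := by
      simp [singleLayer, hσ0]
    rw [this]
    simpa using hε.le
  · obtain ⟨r, hr⟩ := hK.isBounded.subset_closedBall 0
    set D := max 1 (Real.log (C / ε) / c₀) with hD_def
    refine ⟨r + D, fun x hxR t ht => ?_⟩
    have hdlow : ‖x‖ - r ≤ Metric.infDist x K := by
      rw [Metric.infDist_eq_iInf]
      haveI : Nonempty K := hne.to_subtype
      apply le_ciInf
      rintro ⟨y, hy⟩
      have hyr : ‖y‖ ≤ r := by
        have := hr hy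
        rwa [Metric.mem_closedBall, dist_zero_right] at this
      have h2 : ‖x‖ - ‖y‖ ≤ dist x y := by
        rw [dist_eq_norm]; exact norm_sub_norm_le x y
      simp only []
      linarith
    set d := Metric.infDist x K with hd_def
    have hDx : D ≤ d := by linarith
    have hd1 : 1 ≤ d := le_trans (le_max_left _ _) hDx
    have hdlog : Real.log (C / ε) / c₀ ≤ d := le_trans (le_max_right _ _) hDx
    have hb := hbound t ht x hd1
    have h1 : -c₀ * d ^ 2 ≤ -c₀ * d := by
      nlinarith [mul_nonneg hc₀.le (mul_nonneg (by linarith : (0:ℝ) ≤ d)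
        (by linarith : (0:ℝ) ≤ d - 1))]
    have h2 : -c₀ * d ≤ -Real.log (C / ε) := by
      have : Real.log (C / ε) ≤ c₀ * d := by
        calc Real.log (C / ε) = c₀ * (Real.log (C / ε) / c₀) := by field_simp
          _ ≤ c₀ * d := mul_le_mul_of_nonneg_left hdlog hc₀.le
      linarith
    have h4 : Real.exp (-Real.log (C / ε)) = ε / C := by
      rw [← Real.log_inv, Real.exp_log (by positivity), inv_div]
    have h3 : Real.exp (-c₀ * d ^ 2) ≤ ε / C := by
      rw [← h4]
      exact Real.exp_le_exp.2 (h1.trans h2)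
    calc |singleLayer n σ μ t x| ≤ C * Real.exp (-c₀ * d ^ 2) := hb
      _ ≤ C * (ε / C) := mul_le_mul_of_nonneg_left h3 hC.le
      _ = ε := by field_simp
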